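/- Let Γ be a group and v ∈ Γ. Then: (i) the graded subspace (Id − T̃_*)C_*(Γ,ℂv) is a subcomplex of C_*(Γ,ℂv) (it is stable under the differential ∂) and is stable under the action of Z(v); (ii) if v has infinite order, then the linear map Id − T̃_n : C_n(Γ,ℂv) → C_n(Γ,ℂv) is injective for every n ≥ 0 (equivalently, the automorphism T̃_n has no nonzero fixed vectors, since T̃_n^{n+1} equals the action of v⁻¹). -/

import Mathlib

noncomputable section

open Finsupp

/-- `C_*(Γ,ℂv)` for a fixed `v`: free `ℂ`-vector space on the tuples `[g₀,…,gₙ]`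
(the twisting element `v` is a fixed parameter). -/
abbrev BarC (Γ : Type) (n : ℕ) : Type := (Fin (n+1) → Γ) →₀ ℂ

/-- The simplicial differential on `C_*(Γ,ℂv)`. -/
def barD (Γ : Type) (n : ℕ) : BarC Γ (n+1) →ₗ[ℂ] BarC Γ n :=
  Finsupp.lsum ℂ fun x => ∑ i : Fin (n+2), ((-1:ℂ)^(i:ℕ)) •
    (Finsupp.lsingle (x ∘ i.succAbove) : ℂ →ₗ[ℂ] BarC Γ n)

/-- The Hochschild chains `C̃_n(ℂΓ) = (ℂΓ)^{⊗(n+1)}`, with basis `h₀⊗…⊗hₙ`. -/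
abbrev Htens (Γ : Type) (n : ℕ) : Type := (Fin (n+1) → Γ) →₀ ℂ

/-- The cyclic operator `T_n(h₀⊗…⊗hₙ) = (−1)^n hₙ⊗h₀⊗…⊗h_{n−1}`. -/
def cycT (Γ : Type) (n : ℕ) : Htens Γ n →ₗ[ℂ] Htens Γ n :=
  Finsupp.lsum ℂ fun h => ((-1:ℂ)^n) •
    (Finsupp.lsingle (fun j : Fin (n+1) => h (j - 1)) : ℂ →ₗ[ℂ] Htens Γ n)

/-- The lifted cyclic operator `T̃_n[g₀,…,gₙ;v] = (−1)^n [v⁻¹gₙ,g₀,…,g_{n−1};v]`. -/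
def cycTt {Γ : Type} [Group Γ] (v : Γ) (n : ℕ) : BarC Γ n →ₗ[ℂ] BarC Γ n :=
  Finsupp.lsum ℂ fun g => ((-1:ℂ)^n) •
    (Finsupp.lsingle (fun j : Fin (n+1) =>
      if j = 0 then v⁻¹ * g (Fin.last n) else g (j - 1)) : ℂ →ₗ[ℂ] BarC Γ n)

/-- The tuple `(gₙ⁻¹vg₀, g₀⁻¹g₁, …, g_{n−1}⁻¹gₙ)`. -/
def pTuple {Γ : Type} [Group Γ] {n : ℕ} (v : Γ) (g : Fin (n+1) → Γ) : Fin (n+1) → Γ :=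
  fun j => if h : (j:ℕ) = 0 then (g (Fin.last n))⁻¹ * v * g 0
    else (g ⟨(j:ℕ)-1, by have := j.isLt; omega⟩)⁻¹ * g j

/-- The map `p_v[g₀,…,gₙ;v] = (gₙ⁻¹vg₀)⊗(g₀⁻¹g₁)⊗…⊗(g_{n−1}⁻¹gₙ)`. -/
def pMap {Γ : Type} [Group Γ] (v : Γ) (n : ℕ) : BarC Γ n →ₗ[ℂ] Htens Γ n :=
  Finsupp.lsum ℂ fun g => (Finsupp.lsingle (pTuple v g) : ℂ →ₗ[ℂ] Htens Γ n)

/-- The centralizer `Z(v)`. -/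
abbrev Zc {Γ : Type} [Group Γ] (v : Γ) : Subgroup Γ := Subgroup.centralizer {v}

/-- The quotient `N(v) = Z(v)/v^ℤ` (as a quotient by the subgroup of `Z(v)`
induced by the powers of `v`). -/
abbrev Nquot {Γ : Type} [Group Γ] (v : Γ) :=
  Zc v ⧸ (Subgroup.zpowers v).subgroupOf (Zc v)

/-- The averaging operator
`N_{σ'}[g₀,…,gₙ;v] = |N(v)|⁻¹ Σ_{h∈N(v)} [σ'(h)g₀,…,σ'(h)gₙ;v]`. -/
def Nsig {Γ : Type} [Group Γ] (v : Γ) [Finite (Nquot v)] (σ' : Nquot v → Zc v)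
    (n : ℕ) : BarC Γ n →ₗ[ℂ] BarC Γ n :=
  haveI := Fintype.ofFinite (Nquot v)
  ((Nat.card (Nquot v) : ℂ))⁻¹ • ∑ h : Nquot v,
    (Finsupp.lmapDomain ℂ ℂ fun g => fun j => ((σ' h : Γ) * g j) :
      BarC Γ n →ₗ[ℂ] BarC Γ n)

/-- Left translation `h·[g₀,…,gₙ;v] = [hg₀,…,hgₙ;v]` on `C_*(Γ,ℂv)`. -/
def lAct {Γ : Type} [Group Γ] (h : Γ) (n : ℕ) : BarC Γ n →ₗ[ℂ] BarC Γ n :=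
  Finsupp.lmapDomain ℂ ℂ fun g => fun j => h * g j


section Helpers

variable {Γ : Type} [Group Γ]

/-- The rotation of tuples underlying the lifted cyclic operator. -/
def rotF (v : Γ) (n : ℕ) (g : Fin (n+1) → Γ) : Fin (n+1) → Γ :=
  fun j => if j = 0 then v⁻¹ * g (Fin.last n) else g (j - 1)

lemma cycTt_single (v : Γ) (n : ℕ) (g : Fin (n+1) → Γ) (c : ℂ) :
    cycTt v n (Finsupp.single g c) = ((-1:ℂ)^n) • Finsupp.single (rotF v n g) c := by
  simp only [cycTt, Finsupp.lsum_single, LinearMap.smul_apply, Finsupp.lsingle_apply]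
  rfl

lemma barD_single (Γ : Type) (n : ℕ) (g : Fin (n+2) → Γ) (c : ℂ) :
    barD Γ n (Finsupp.single g c) =
      ∑ i : Fin (n+2), ((-1:ℂ)^(i:ℕ)) • Finsupp.single (g ∘ i.succAbove) c := by
  simp only [barD, Finsupp.lsum_single, LinearMap.sum_apply, LinearMap.smul_apply,
    Finsupp.lsingle_apply]

lemma succ_sub_one' {n : ℕ} (a : Fin n) : (a.succ : Fin (n+1)) - 1 = a.castSucc := by
  apply Fin.ext
  simp [Fin.coe_sub_one, Fin.succ_ne_zero]

lemma rotF_comp_zero (v : Γ) (n : ℕ) (g : Fin (n+2) → Γ) :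
    rotF v (n+1) g ∘ Fin.succ = g ∘ Fin.castSucc := by
  funext k
  simp only [Function.comp_apply, rotF, Fin.succ_ne_zero, if_false, succ_sub_one']

lemma rotF_comp_succ (v : Γ) (n : ℕ) (g : Fin (n+2) → Γ) (j : Fin (n+1)) :
    rotF v (n+1) g ∘ (j.succ).succAbove = rotF v n (g ∘ (j.castSucc).succAbove) := by
  funext k
  induction k using Fin.cases with
  | zero =>
    have hl : j.castSucc.succAbove (Fin.last n) = Fin.last (n+1) := by
      rw [Fin.succAbove_of_le_castSucc _ _ (by rw [Fin.le_def]; simp [Fin.last]; omega)]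
      exact Fin.succ_last n
    simp [Function.comp_apply, Fin.succ_succAbove_zero, rotF, hl]
  | succ m =>
    simp only [Function.comp_apply, Fin.succ_succAbove_succ, rotF, Fin.succ_ne_zero, if_false,
      succ_sub_one', Fin.castSucc_succAbove_castSucc]

/-- The simplicial identity `∂ ∘ (Id − T̃) = (Id − T̃) ∘ ∂'`. -/
lemma barD_comp_one_sub_cycTt (v : Γ) (n : ℕ) :
    (barD Γ n).comp (LinearMap.id - cycTt v (n+1)) =
      (LinearMap.id - cycTt v n).comp
        (barD Γ n - ((-1:ℂ)^(n+1)) •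
          (Finsupp.lmapDomain ℂ ℂ (fun x : Fin (n+2) → Γ => x ∘ Fin.castSucc) :
            BarC Γ (n+1) →ₗ[ℂ] BarC Γ n)) := by
  apply Finsupp.lhom_ext
  intro g c
  simp only [LinearMap.comp_apply, LinearMap.sub_apply, LinearMap.id_apply,
    LinearMap.smul_apply, Finsupp.lmapDomain_apply, Finsupp.mapDomain_single,
    cycTt_single, barD_single, map_sub, map_smul, map_sum]
  have hB : (∑ i : Fin (n+2), ((-1:ℂ))^(i:ℕ) • (Finsupp.single (rotF v (n+1) g ∘ i.succAbove) c : BarC Γ n))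
      = Finsupp.single (g ∘ Fin.castSucc) c
        + ∑ j : Fin (n+1), ((-1:ℂ))^((j:ℕ)+1) •
            Finsupp.single (rotF v n (g ∘ (j.castSucc).succAbove)) c := by
    rw [Fin.sum_univ_succ]
    simp [rotF_comp_zero v n g, rotF_comp_succ v n g, Fin.val_succ]
  have hC : (∑ x : Fin (n+2), ((-1:ℂ))^(x:ℕ) •
        ((Finsupp.single (g ∘ x.succAbove) c : BarC Γ n)
          - ((-1:ℂ))^n • Finsupp.single (rotF v n (g ∘ x.succAbove)) c))
      = (∑ i : Fin (n+2), ((-1:ℂ))^(i:ℕ) • (Finsupp.single (g ∘ i.succAbove) c : BarC Γ n))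
        - (∑ j : Fin (n+1), (((-1:ℂ))^((j:ℕ)) * ((-1:ℂ))^n) •
              Finsupp.single (rotF v n (g ∘ (j.castSucc).succAbove)) c
           + (((-1:ℂ))^(n+1) * ((-1:ℂ))^n) • Finsupp.single (rotF v n (g ∘ Fin.castSucc)) c) := by
    simp only [smul_sub, smul_smul]
    rw [Finset.sum_sub_distrib]
    congr 1
    rw [Fin.sum_univ_castSucc]
    simp [Fin.succAbove_last, Fin.coe_castSucc, Fin.val_last]
  rw [hC, hB]
  have h1 : ∑ j : Fin (n+1), ((-1:ℂ))^((j:ℕ)+1) •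
        Finsupp.single (rotF v n (g ∘ (j.castSucc).succAbove)) c
      = (-1 : ℂ) • ∑ j : Fin (n+1), ((-1:ℂ))^((j:ℕ)) •
        (Finsupp.single (rotF v n (g ∘ (j.castSucc).succAbove)) c : BarC Γ n) := by
    rw [Finset.smul_sum]
    refine Finset.sum_congr rfl fun j _ => ?_
    rw [smul_smul, pow_succ, mul_comm]
  have h2 : ∑ j : Fin (n+1), (((-1:ℂ))^((j:ℕ)) * ((-1:ℂ))^n) •
        Finsupp.single (rotF v n (g ∘ (j.castSucc).succAbove)) c
      = ((-1:ℂ))^n • ∑ j : Fin (n+1), ((-1:ℂ))^((j:ℕ)) •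
        (Finsupp.single (rotF v n (g ∘ (j.castSucc).succAbove)) c : BarC Γ n) := by
    rw [Finset.smul_sum]
    refine Finset.sum_congr rfl fun j _ => ?_
    rw [smul_smul, mul_comm]
  rw [h1, h2]
  generalize (∑ i : Fin (n+2), ((-1:ℂ))^(i:ℕ) • (Finsupp.single (g ∘ i.succAbove) c : BarC Γ n)) = S
  generalize (Finsupp.single (g ∘ Fin.castSucc) c : BarC Γ n) = P
  generalize (∑ j : Fin (n+1), ((-1:ℂ))^((j:ℕ)) •
      (Finsupp.single (rotF v n (g ∘ (j.castSucc).succAbove)) c : BarC Γ n)) = Q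
  generalize (Finsupp.single (rotF v n (g ∘ Fin.castSucc)) c : BarC Γ n) = Y
  module

/-- The `Z(v)`-action commutes with `Id − T̃`. -/
lemma lAct_comm_one_sub_cycTt (v h : Γ) (hh : h ∈ Subgroup.centralizer ({v} : Set Γ)) (n : ℕ) :
    (lAct h n).comp (LinearMap.id - cycTt v n)
      = (LinearMap.id - cycTt v n).comp (lAct h n) := by
  have hc : h * v = v * h := Subgroup.mem_centralizer_singleton_iff.mp hh
  have hinv : h * v⁻¹ = v⁻¹ * h := Commute.inv_right hc
  apply Finsupp.lhom_ext; intro g c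
  have hrot : (fun j => h * rotF v n g j) = rotF v n (fun j => h * g j) := by
    funext j
    simp only [rotF]
    split_ifs
    · rw [← mul_assoc, hinv, mul_assoc]
    · rfl
  simp only [LinearMap.comp_apply, LinearMap.sub_apply, LinearMap.id_apply, lAct,
    Finsupp.lmapDomain_apply, Finsupp.mapDomain_single, cycTt_single, map_sub, map_smul,
    Finsupp.mapDomain_single, hrot]

lemma cycTt_eq_mapDomain (v : Γ) (n : ℕ) :
    cycTt v n = ((-1:ℂ)^n) •
      (Finsupp.lmapDomain ℂ ℂ (rotF v n) : BarC Γ n →ₗ[ℂ] BarC Γ n) := by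
  apply Finsupp.lhom_ext; intro g c
  simp [cycTt_single]

lemma rotF_injective (v : Γ) (n : ℕ) : Function.Injective (rotF v n) := by
  intro a b hab
  funext j
  by_cases hj : (j : ℕ) = n
  · have h0 := congrFun hab 0
    simp only [rotF, if_pos rfl] at h0
    have : j = Fin.last n := Fin.ext hj
    rw [this]
    exact mul_left_cancel h0
  · have hlt : (j : ℕ) < n := by have := j.isLt; omega
    set k : Fin (n+1) := ⟨(j : ℕ) + 1, by omega⟩ with hk
    have hk0 : k ≠ 0 := by
      intro h
      have := congrArg Fin.val h
      simp [hk] at this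
    have h1 := congrFun hab k
    simp only [rotF, if_neg hk0] at h1
    have hsub : k - 1 = j := by
      apply Fin.ext
      rw [Fin.coe_sub_one, if_neg hk0]
      simp [hk]
    rwa [hsub] at h1

lemma rotF_iter_le (v : Γ) (n : ℕ) (g : Fin (n+1) → Γ) :
    ∀ k, k ≤ n + 1 → ∀ j : Fin (n+1),
      (rotF v n)^[k] g j = if (j : ℕ) < k
        then v⁻¹ * g ⟨((j : ℕ) + (n+1) - k) % (n+1), Nat.mod_lt _ (by omega)⟩
        else g ⟨(j : ℕ) - k, by have := j.isLt; omega⟩ := by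
  intro k
  induction k with
  | zero =>
    intro _ j
    simp
  | succ k ih =>
    intro hk j
    rw [Function.iterate_succ_apply']
    show rotF v n ((rotF v n)^[k] g) j = _
    by_cases hj0 : j = 0
    · subst hj0
      have h0 : rotF v n ((rotF v n)^[k] g) 0 = v⁻¹ * ((rotF v n)^[k] g) (Fin.last n) := by
        simp [rotF]
      rw [h0, ih (by omega) (Fin.last n), if_neg (by simp only [Fin.val_last]; omega),
        if_pos (by simp)]
      congr 1
      apply congrArg g
      apply Fin.ext
      show ((Fin.last n : Fin (n+1)) : ℕ) - k = (((0:Fin (n+1)):ℕ) + (n+1) - (k+1)) % (n+1)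
      rw [Nat.mod_eq_of_lt (by simp)]
      simp only [Fin.val_last, Fin.val_zero]
      omega
    · have hj1 : (j : ℕ) ≠ 0 := fun h => hj0 (Fin.ext h)
      have h0 : rotF v n ((rotF v n)^[k] g) j = ((rotF v n)^[k] g) (j - 1) := by
        simp [rotF, hj0]
      have hv : ((j - 1 : Fin (n+1)) : ℕ) = (j : ℕ) - 1 := by
        rw [Fin.coe_sub_one, if_neg hj0]
      rw [h0, ih (by omega) (j - 1)]
      split_ifs with h1 h2 h3
      · congr 1
        apply congrArg g
        apply Fin.ext
        show _ % _ = _ % _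
        congr 1
        omega
      · omega
      · omega
      · apply congrArg g
        apply Fin.ext
        show ((j - 1 : Fin (n+1)) : ℕ) - k = (j : ℕ) - (k+1)
        omega

lemma rotF_iter_full (v : Γ) (n : ℕ) (g : Fin (n+1) → Γ) :
    (rotF v n)^[n+1] g = fun j => v⁻¹ * g j := by
  funext j
  rw [rotF_iter_le v n g (n+1) le_rfl j, if_pos j.isLt]
  congr 1
  apply congrArg g
  apply Fin.ext
  show ((j : ℕ) + (n+1) - (n+1)) % (n+1) = (j : ℕ)
  rw [Nat.add_sub_cancel, Nat.mod_eq_of_lt j.isLt]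

lemma rotF_iter_mul (v : Γ) (n : ℕ) (m : ℕ) (g : Fin (n+1) → Γ) :
    (rotF v n)^[(n+1) * m] g = fun j => (v⁻¹)^m * g j := by
  induction m with
  | zero => funext j; simp
  | succ m ih =>
    have h : (n+1) * (m+1) = (n+1) + (n+1) * m := by ring
    rw [h, Function.iterate_add_apply, ih, rotF_iter_full]
    funext j
    rw [pow_succ', mul_assoc]

end Helpers

/-- (i) the graded subspace `(Id − T̃_*)C_*(Γ,ℂv)` is a subcomplex of
`C_*(Γ,ℂv)` stable under the action of the centralizer `Z(v)`; (ii) if `v` has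
infinite order then `Id − T̃_n` is injective in every degree. -/
theorem one_minus_cyclic_subcomplex_and_injective {Γ : Type} [Group Γ] (v : Γ) :
    -- (i) stability under the differential
    ((∀ n : ℕ, (LinearMap.range (LinearMap.id - cycTt v (n+1))).map (barD Γ n) ≤
        LinearMap.range (LinearMap.id - cycTt v n)) ∧
     -- (i) stability under the Z(v)-action
     (∀ (n : ℕ), ∀ h ∈ Subgroup.centralizer ({v} : Set Γ),
        (LinearMap.range (LinearMap.id - cycTt v n)).map (lAct h n) ≤
          LinearMap.range (LinearMap.id - cycTt v n))) ∧
    -- (ii) injectivity for v of infinite order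
    (¬ IsOfFinOrder v →
      ∀ n : ℕ, Function.Injective (LinearMap.id - cycTt v n : BarC Γ n →ₗ[ℂ] BarC Γ n)) := by
  refine ⟨⟨?_, ?_⟩, ?_⟩
  · -- stability under the differential
    intro n y hy
    rw [Submodule.mem_map] at hy
    obtain ⟨x, hx, rfl⟩ := hy
    rw [LinearMap.mem_range] at hx
    obtain ⟨z, rfl⟩ := hx
    rw [LinearMap.mem_range]
    exact ⟨_, (LinearMap.congr_fun (barD_comp_one_sub_cycTt v n) z).symm⟩
  · -- stability under the Z(v)-action
    intro n h hh y hy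
    rw [Submodule.mem_map] at hy
    obtain ⟨x, hx, rfl⟩ := hy
    rw [LinearMap.mem_range] at hx
    obtain ⟨z, rfl⟩ := hx
    rw [LinearMap.mem_range]
    exact ⟨_, (LinearMap.congr_fun (lAct_comm_one_sub_cycTt v h hh n) z).symm⟩
  · -- injectivity
    intro hv n
    have hker : ∀ z : BarC Γ n, (LinearMap.id - cycTt v n : BarC Γ n →ₗ[ℂ] BarC Γ n) z = 0 → z = 0 := by
      intro z hz
      by_contra hz0
      have h1 : z = cycTt v n z := by
        rw [LinearMap.sub_apply, LinearMap.id_apply, sub_eq_zero] at hz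
        exact hz
      have hfix : ∀ g : Fin (n+1) → Γ, z (rotF v n g) = ((-1:ℂ)^n) * z g := by
        intro g
        calc z (rotF v n g) = (cycTt v n z) (rotF v n g) := by rw [← h1]
          _ = ((-1:ℂ)^n) * (Finsupp.mapDomain (rotF v n) z) (rotF v n g) := by
              rw [cycTt_eq_mapDomain]
              simp [Finsupp.lmapDomain_apply]
          _ = ((-1:ℂ)^n) * z g := by
              rw [Finsupp.mapDomain_apply (rotF_injective v n)]
      have hsupp : ∀ g ∈ z.support, ∀ k : ℕ, (rotF v n)^[k] g ∈ z.support := by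
        intro g hg k
        induction k with
        | zero => exact hg
        | succ k ih =>
          rw [Function.iterate_succ_apply']
          rw [Finsupp.mem_support_iff] at ih ⊢
          rw [hfix]
          exact mul_ne_zero (pow_ne_zero _ (by norm_num)) ih
      obtain ⟨g, hg⟩ := Finsupp.support_nonempty_iff.mpr hz0
      have hinj : Function.Injective (fun m : ℕ => (rotF v n)^[(n+1) * m] g) := by
        intro a b hab
        simp only [rotF_iter_mul] at hab
        have h2 : (v⁻¹)^a * g 0 = (v⁻¹)^b * g 0 := congrFun hab 0
        have h3 : (v⁻¹)^a = (v⁻¹)^b := mul_right_cancel h2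
        have hvinv : ¬ IsOfFinOrder v⁻¹ := by
          rw [isOfFinOrder_inv_iff]
          exact hv
        exact injective_pow_iff_not_isOfFinOrder.mpr hvinv h3
      exact (Set.infinite_of_injective_forall_mem hinj
        (fun m => hsupp g hg ((n+1) * m))) z.support.finite_toSet
    intro x y hxy
    have h4 : (LinearMap.id - cycTt v n : BarC Γ n →ₗ[ℂ] BarC Γ n) (x - y) = 0 := by
      rw [map_sub, hxy, sub_self]
    exact sub_eq_zero.mp (hker _ h4)
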